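/- Let S be a finite set, λ > 0, g ∈ ℝ, h : S → ℝ, i ∈ S, c_i ∈ ℝ, and let (q_j)_{j∈S} be real numbers with q_j ≥ 0 for all j ≠ i and Σ_{j∈S} q_j = 0. Define Q := ∫₀^∞ exp((λ(c_i − g) + q_i)·s) ds ∈ (0,∞]. If e^{λh(i)} ≤ Q·Σ_{j∈S, j≠i} e^{λh(j)}·q_j holds in [0,∞] (with the convention 0·∞ = 0), then λ·c_i·e^{λh(i)} + Σ_{j∈S} e^{λh(j)}·q_j ≥ λ·g·e^{λh(i)}. (Inequality (w-3) in the proof of Theorem 3.2(a): any solution of the first-passage form of the optimality equation is a subsolution of the risk-sensitive average cost optimality equation at every state-action pair.) -/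

import Mathlib

open MeasureTheory Set
open scoped ENNReal

/-- **Inequality (w-3)**: if `e^{λ h(i)} ≤ Q · Σ_{j ≠ i} e^{λ h(j)} q_j` in `[0,∞]`
(convention `0·∞ = 0`), where `Q = ∫₀^∞ e^{(λ(c_i − g) + q_i) s} ds`, then
`λ c_i e^{λ h(i)} + Σ_j e^{λ h(j)} q_j ≥ λ g e^{λ h(i)}`. -/
theorem stmt4 {S : Type*} [Fintype S] [DecidableEq S]
    (lam : ℝ) (hlam : 0 < lam) (g : ℝ) (h : S → ℝ) (i : S) (ci : ℝ) (q : S → ℝ)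
    (hq_nonneg : ∀ j, j ≠ i → 0 ≤ q j) (hq_sum : ∑ j, q j = 0)
    (hle : ENNReal.ofReal (Real.exp (lam * h i)) ≤
      (∫⁻ s in Ioi (0 : ℝ), ENNReal.ofReal (Real.exp ((lam * (ci - g) + q i) * s))) *
        ∑ j ∈ Finset.univ.erase i,
          ENNReal.ofReal (Real.exp (lam * h j)) * ENNReal.ofReal (q j)) :
    lam * g * Real.exp (lam * h i) ≤
      lam * ci * Real.exp (lam * h i) + ∑ j, Real.exp (lam * h j) * q j := by
  set a : ℝ := lam * (ci - g) + q i with ha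
  set E : ℝ := Real.exp (lam * h i) with hE
  set T : ℝ := ∑ j ∈ Finset.univ.erase i, Real.exp (lam * h j) * q j with hT
  have hEpos : 0 < E := Real.exp_pos _
  have hTnonneg : 0 ≤ T := by
    apply Finset.sum_nonneg
    intro j hj
    exact mul_nonneg (Real.exp_pos _).le (hq_nonneg j (Finset.ne_of_mem_erase hj))
  have hsum : ∑ j, Real.exp (lam * h j) * q j = E * q i + T := by
    rw [hT, ← Finset.add_sum_erase _ _ (Finset.mem_univ i)]
  -- key inequality : -a * E ≤ T
  have key : -a * E ≤ T := by
    rcases le_or_gt 0 a with hcase | hcase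
    · nlinarith
    · -- a < 0 : compute the integral
      have hbnd : (∫⁻ s in Ioi (0 : ℝ), ENNReal.ofReal (Real.exp (a * s)))
          = ENNReal.ofReal ((-a)⁻¹) := by
        have hint : IntegrableOn (fun x : ℝ => Real.exp (a * x)) (Ioi 0) := by
          have := exp_neg_integrableOn_Ioi 0 (b := -a) (by linarith)
          simpa using this
        have hval : (∫ x in Ioi (0 : ℝ), Real.exp (a * x)) = (-a)⁻¹ := by
          have hderiv : ∀ x ∈ Ici (0 : ℝ),
              HasDerivAt (fun x : ℝ => Real.exp (a * x) / a) (Real.exp (a * x)) x := by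
            intro x _
            have : HasDerivAt (fun x : ℝ => Real.exp (a * x)) (Real.exp (a * x) * a) x := by
              have h1 : HasDerivAt (fun x : ℝ => a * x) a x := by
                simpa using (hasDerivAt_id x).const_mul a
              exact (Real.hasDerivAt_exp (a * x)).comp x h1
            have := this.div_const a
            simpa [mul_div_assoc, mul_div_cancel_right₀ _ hcase.ne] using this
          have htend : Filter.Tendsto (fun x : ℝ => Real.exp (a * x) / a)
              Filter.atTop (nhds 0) := by
            have h1 : Filter.Tendsto (fun x : ℝ => Real.exp (a * x)) Filter.atTop (nhds 0) := by
              have : Filter.Tendsto (fun x : ℝ => a * x) Filter.atTop Filter.atBot :=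
                Filter.tendsto_id.const_mul_atTop_of_neg hcase
              exact Real.tendsto_exp_atBot.comp this
            simpa using h1.div_const a
          have := integral_Ioi_of_hasDerivAt_of_tendsto' hderiv hint htend
          rw [this, mul_zero, Real.exp_zero, inv_neg]
          ring
        rw [← MeasureTheory.ofReal_integral_eq_lintegral_ofReal hint
          (Filter.Eventually.of_forall fun x => (Real.exp_pos _).le), hval]
      have hTenn : (∑ j ∈ Finset.univ.erase i,
          ENNReal.ofReal (Real.exp (lam * h j)) * ENNReal.ofReal (q j))
          = ENNReal.ofReal T := by
        rw [hT, ENNReal.ofReal_sum_of_nonneg]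
        · exact Finset.sum_congr rfl fun j hj => (ENNReal.ofReal_mul (Real.exp_pos _).le).symm
        · intro j hj
          exact mul_nonneg (Real.exp_pos _).le (hq_nonneg j (Finset.ne_of_mem_erase hj))
      rw [hbnd, hTenn, ← ENNReal.ofReal_mul (inv_nonneg.mpr (by linarith : (0:ℝ) ≤ -a))] at hle
      have hle' : E ≤ (-a)⁻¹ * T :=
        (ENNReal.ofReal_le_ofReal_iff (mul_nonneg (inv_nonneg.mpr (by linarith : (0:ℝ) ≤ -a)) hTnonneg)).mp hle
      have hna : 0 < -a := by linarith
      calc -a * E ≤ -a * ((-a)⁻¹ * T) := by nlinarith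
        _ = T := by rw [← mul_assoc, mul_inv_cancel₀ hna.ne', one_mul]
  nlinarith [key, hsum]
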